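/- (Single-valuedness Theorem I) Let A ⊆ ℕ be an infinite computably enumerable set, let θ be a quasi-Gödel numbering of S_A, and set W^A_i = {w : ℕ | ∃ x, θ i x = Part.some w}. Then there is a total computable sv : ℕ → ℕ such that for every i: (1) W^A_{sv i} is single-valued (for all x, y, y', if Nat.pair x y ∈ W^A_{sv i} and Nat.pair x y' ∈ W^A_{sv i} then y = y'); (2) W^A_{sv i} ⊆ W^A_i; (3) {x | ∃ y, Nat.pair x y ∈ W^A_{sv i}} = {x | ∃ y, Nat.pair x y ∈ W^A_i}; and (4) if W^A_i is single-valued then W^A_{sv i} = W^A_i. -/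

import Mathlib

/-- `r : ℕ →. ℕ` is an initial-segment function for `A`: its domain is empty or
equals `{m | m < a}` for some `a ∈ A`. -/
def IsInitSeg (A : Set ℕ) (r : ℕ →. ℕ) : Prop :=
  {x : ℕ | (r x).Dom} = (∅ : Set ℕ) ∨ ∃ a ∈ A, {x : ℕ | (r x).Dom} = {m : ℕ | m < a}

/-- `SA A` is the class of unary partial functions that are either total computable
or initial-segment functions for `A`. -/
def SA (A : Set ℕ) : Set (ℕ →. ℕ) :=
  {r | (∃ f : ℕ → ℕ, Computable f ∧ ∀ x, r x = Part.some (f x)) ∨ IsInitSeg A r}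

/-- The extended graph of a unary partial function. -/
def graphE (q : ℕ →. ℕ) : Set ℕ :=
  {n | ∃ y, n = Nat.pair y 0} ∪ {n | ∃ x z, q x = Part.some z ∧ n = Nat.pair x (z + 1)}

/-- The graph of a unary partial function. -/
def pgraph (q : ℕ →. ℕ) : Set ℕ :=
  {n | ∃ x z, q x = Part.some z ∧ n = Nat.pair x z}

/-- Condition (QGN I): the extended graph of the universal function of `θ` is
enumerated by a total computable function. -/
def QGN1 (θ : ℕ → ℕ →. ℕ) : Prop :=
  ∃ h : ℕ → ℕ, Computable h ∧
    Set.range h = {n | ∃ w, n = Nat.pair w 0} ∪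
      {n | ∃ i x z, θ i x = Part.some z ∧ n = Nat.pair (Nat.pair i x) (z + 1)}

/-- Condition (QGN II). -/
def QGN2 (A : Set ℕ) (θ : ℕ → ℕ →. ℕ) : Prop :=
  ∀ k : ℕ → ℕ → ℕ, Computable₂ k →
    ∃ v : ℕ → ℕ, Computable v ∧
      ∀ i, ∀ r ∈ SA A, Set.range (k i) = graphE r → θ (v i) = r

/-- A quasi-Gödel numbering of `SA A`. -/
def QuasiGodel (A : Set ℕ) (θ : ℕ → ℕ →. ℕ) : Prop :=
  Set.range θ = SA A ∧ QGN1 θ ∧ QGN2 A θ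

/-- A set of naturals is computably enumerable. -/
def CEset (C : Set ℕ) : Prop :=
  C = ∅ ∨ ∃ g : ℕ → ℕ, Computable g ∧ C = Set.range g

/-- The standard Gödel numbering of the unary partial recursive functions. -/
def phi (i : ℕ) : ℕ →. ℕ :=
  Nat.Partrec.Code.eval (Denumerable.ofNat Nat.Partrec.Code i)

/-- `WA θ i` is the `i`-th computably enumerable set, the range of `θ i`. -/
def WA (θ : ℕ → ℕ →. ℕ) (i : ℕ) : Set ℕ := {w : ℕ | ∃ x, θ i x = Part.some w}

/-- A set of (codes of) pairs is single-valued. -/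
def SingleValued (C : Set ℕ) : Prop :=
  ∀ x y y', Nat.pair x y ∈ C → Nat.pair x y' ∈ C → y = y'

namespace SVaux

/-- value slot of the `n`-th enumerated item (0 = padding). -/
def U (h : ℕ → ℕ) (n : ℕ) : ℕ := (Nat.unpair (h n)).2
/-- the value coded (if `U h n ≠ 0`). -/
def V (h : ℕ → ℕ) (n : ℕ) : ℕ := (Nat.unpair (h n)).2 - 1
/-- the index coded. -/
def I (h : ℕ → ℕ) (n : ℕ) : ℕ := (Nat.unpair (Nat.unpair (h n)).1).1

/-- stage `m` spoils stage `n` for index `i`. -/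
def Bad (h : ℕ → ℕ) (i n m : ℕ) : Bool :=
  decide (U h m ≠ 0) && decide (I h m = i) &&
    decide ((Nat.unpair (V h m)).1 = (Nat.unpair (V h n)).1) && decide (V h m ≠ V h n)

/-- no stage `< m` spoils stage `n`. -/
def All (h : ℕ → ℕ) (i n : ℕ) : ℕ → Bool
  | 0 => true
  | m + 1 => All h i n m && !Bad h i n m

/-- stage `n` is a "first value" stage for index `i`. -/
def P (h : ℕ → ℕ) (i n : ℕ) : Bool :=
  decide (U h n ≠ 0) && decide (I h n = i) && All h i n n

theorem bad_iff {h i n m} : Bad h i n m = true ↔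
    (U h m ≠ 0 ∧ I h m = i ∧ (Nat.unpair (V h m)).1 = (Nat.unpair (V h n)).1 ∧ V h m ≠ V h n) := by
  simp [Bad, and_assoc]

theorem all_iff {h i n} : ∀ m, All h i n m = true ↔ ∀ m' < m, Bad h i n m' = false
  | 0 => by simp [All]
  | m + 1 => by
    simp only [All, Bool.and_eq_true, all_iff m, Bool.not_eq_true', Nat.lt_succ_iff_lt_or_eq]
    constructor
    · rintro ⟨h1, h2⟩ m' (hm' | rfl)
      · exact h1 m' hm'
      · exact h2
    · intro h1
      exact ⟨fun m' hm' => h1 m' (Or.inl hm'), h1 m (Or.inr rfl)⟩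

theorem p_iff {h i n} : P h i n = true ↔
    (U h n ≠ 0 ∧ I h n = i ∧ ∀ m < n, Bad h i n m = false) := by
  simp [P, and_assoc, all_iff]

/-- least stage `≤ s` satisfying `P h i`, or `s+1` if none. -/
def LB (h : ℕ → ℕ) (i : ℕ) : ℕ → ℕ
  | 0 => bif P h i 0 then 0 else 1
  | s + 1 => bif Nat.ble (LB h i s) s then LB h i s
      else bif P h i (s + 1) then s + 1 else s + 2

/-- greatest stage `≤ x` satisfying `P h i`, or `0` if none. -/
def GB (h : ℕ → ℕ) (i : ℕ) : ℕ → ℕ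
  | 0 => 0
  | x + 1 => bif P h i (x + 1) then x + 1 else GB h i x

theorem lb_spec (h : ℕ → ℕ) (i : ℕ) : ∀ s,
    (LB h i s ≤ s ∧ P h i (LB h i s) = true ∧ ∀ m < LB h i s, P h i m = false) ∨
    (LB h i s = s + 1 ∧ ∀ m ≤ s, P h i m = false)
  | 0 => by
    by_cases h0 : P h i 0 = true
    · left
      simp [LB, h0]
    · right
      simp only [Bool.not_eq_true] at h0
      constructor
      · simp [LB, h0]
      · intro m hm
        simpa [Nat.le_zero.mp hm] using h0
  | s + 1 => by
    rcases lb_spec h i s with ⟨h1, h2, h3⟩ | ⟨h1, h2⟩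
    · left
      have : Nat.ble (LB h i s) s = true := Nat.ble_eq.mpr h1
      simp only [LB, this, cond_true]
      exact ⟨Nat.le_succ_of_le h1, h2, h3⟩
    · have hble : Nat.ble (LB h i s) s = false := by
        rw [Bool.eq_false_iff]
        intro hc
        exact absurd (Nat.ble_eq.mp hc) (by omega)
      by_cases hp : P h i (s + 1) = true
      · left
        have hlb : LB h i (s + 1) = s + 1 := by simp [LB, hble, hp]
        rw [hlb]
        exact ⟨le_refl _, hp, fun m hm => h2 m (by omega)⟩
      · right
        simp only [Bool.not_eq_true] at hp
        constructor
        · simp [LB, hble, hp]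
        · intro m hm
          by_cases hm' : m ≤ s
          · exact h2 m hm'
          · have : m = s + 1 := by omega
            rw [this]
            exact hp

theorem lb_found {h i s m} (hm : m ≤ s) (hp : P h i m = true) : LB h i s ≤ s := by
  rcases lb_spec h i s with ⟨h1, _, _⟩ | ⟨_, h2⟩
  · exact h1
  · exact absurd hp (by simp [h2 m hm])

theorem lb_eq_of_p {h i s} (hs : P h i s = true) (hmin : ∀ m < s, P h i m = false) :
    LB h i s = s := by
  rcases lb_spec h i s with ⟨h1, h2, h3⟩ | ⟨_, h2⟩
  · rcases Nat.lt_trichotomy (LB h i s) s with hlt | heq | hgt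
    · exact absurd h2 (by simp [hmin _ hlt])
    · exact heq
    · omega
  · exact absurd hs (by simp [h2 s (le_refl s)])

theorem gb_le (h : ℕ → ℕ) (i : ℕ) : ∀ x, GB h i x ≤ x
  | 0 => le_refl 0
  | x + 1 => by
    by_cases hp : P h i (x + 1) = true
    · simp [GB, hp]
    · simp only [Bool.not_eq_true] at hp
      simp only [GB, hp, cond_false]
      exact Nat.le_succ_of_le (gb_le h i x)

theorem gb_p (h : ℕ → ℕ) (i : ℕ) : ∀ x, (∃ m ≤ x, P h i m = true) → P h i (GB h i x) = true
  | 0 => by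
    rintro ⟨m, hm, hp⟩
    rw [Nat.le_zero.mp hm] at hp
    simpa [GB] using hp
  | x + 1 => by
    rintro ⟨m, hm, hp⟩
    by_cases hx : P h i (x + 1) = true
    · simpa [GB, hx] using hx
    · have hmx : m ≤ x := by
        rcases Nat.lt_succ_iff_lt_or_eq.mp (Nat.lt_succ_of_le hm) with h1 | rfl
        · omega
        · exact absurd hp hx
      simp only [Bool.not_eq_true] at hx
      simp only [GB, hx, cond_false]
      exact gb_p h i x ⟨m, hmx, hp⟩

theorem gb_self {h i n} (hp : P h i n = true) : GB h i n = n := by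
  cases n with
  | zero => simp [GB]
  | succ x => simp [GB, hp]

/-- The single-valuing operator `k`. -/
def K (h : ℕ → ℕ) (i n : ℕ) : ℕ :=
  bif Nat.beq (Nat.unpair n).1 0 then Nat.pair (Nat.unpair n).2 0
  else
    (fun x s =>
      bif Nat.ble (LB h i x) x then Nat.pair x (V h (GB h i x) + 1)
      else bif Nat.ble (LB h i s) s then Nat.pair x (V h (LB h i s) + 1)
      else Nat.pair 0 0) (Nat.unpair (Nat.unpair n).2).1 (Nat.unpair (Nat.unpair n).2).2


theorem ble_eq_decide (a b : ℕ) : Nat.ble a b = decide (a ≤ b) := by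
  rw [Bool.eq_iff_iff, Nat.ble_eq, decide_eq_true_eq]

theorem beq_eq_decide (a b : ℕ) : Nat.beq a b = decide (a = b) := by
  rw [Bool.eq_iff_iff, Nat.beq_eq, decide_eq_true_eq]

section comp

variable {α : Type} [Primcodable α]

theorem cband {f g : α → Bool} (hf : Computable f) (hg : Computable g) :
    Computable fun a => f a && g a :=
  (Computable.cond hf hg (Computable.const false)).of_eq fun a => by cases f a <;> simp

theorem cbnot {f : α → Bool} (hf : Computable f) : Computable fun a => !f a :=
  (Computable.cond hf (Computable.const false) (Computable.const true)).of_eq fun a => by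
    cases f a <;> simp

theorem cdeq {f g : α → ℕ} (hf : Computable f) (hg : Computable g) :
    Computable fun a => decide (f a = g a) :=
  Primrec.eq.decide.to_comp.comp hf hg

theorem cdne {f g : α → ℕ} (hf : Computable f) (hg : Computable g) :
    Computable fun a => decide (f a ≠ g a) :=
  (cbnot (cdeq hf hg)).of_eq fun a => by by_cases hab : f a = g a <;> simp [hab]

theorem cdle {f g : α → ℕ} (hf : Computable f) (hg : Computable g) :
    Computable fun a => decide (f a ≤ g a) :=
  Primrec.nat_le.decide.to_comp.comp hf hg

theorem cpair {f g : α → ℕ} (hf : Computable f) (hg : Computable g) :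
    Computable fun a => Nat.pair (f a) (g a) :=
  Primrec₂.natPair.to_comp.comp hf hg

end comp

section comph

variable {h : ℕ → ℕ}

theorem compU (hh : Computable h) : Computable (U h) :=
  Computable.snd.comp (Computable.unpair.comp hh)

theorem compV (hh : Computable h) : Computable (V h) :=
  (Primrec.pred.to_comp.comp (compU hh)).of_eq fun n => by
    simp [V, U, Nat.pred_eq_sub_one]

theorem compI (hh : Computable h) : Computable (I h) :=
  Computable.fst.comp (Computable.unpair.comp
    (Computable.fst.comp (Computable.unpair.comp hh)))

theorem compBad (hh : Computable h) : Computable fun p : (ℕ × ℕ) × ℕ => Bad h p.1.1 p.1.2 p.2 := by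
  have c1 : Computable fun p : (ℕ × ℕ) × ℕ => decide (U h p.2 ≠ 0) :=
    cdne ((compU hh).comp Computable.snd) (Computable.const 0)
  have c2 : Computable fun p : (ℕ × ℕ) × ℕ => decide (I h p.2 = p.1.1) :=
    cdeq ((compI hh).comp Computable.snd) (Computable.fst.comp Computable.fst)
  have c3 : Computable fun p : (ℕ × ℕ) × ℕ =>
      decide ((Nat.unpair (V h p.2)).1 = (Nat.unpair (V h p.1.2)).1) :=
    cdeq (Computable.fst.comp (Computable.unpair.comp ((compV hh).comp Computable.snd)))
      (Computable.fst.comp (Computable.unpair.comp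
        ((compV hh).comp (Computable.snd.comp Computable.fst))))
  have c4 : Computable fun p : (ℕ × ℕ) × ℕ => decide (V h p.2 ≠ V h p.1.2) :=
    cdne ((compV hh).comp Computable.snd) ((compV hh).comp (Computable.snd.comp Computable.fst))
  exact (cband (cband (cband c1 c2) c3) c4).of_eq fun p => by simp [Bad]

theorem all_eq_rec (h : ℕ → ℕ) (i n : ℕ) :
    ∀ m, Nat.rec (motive := fun _ => Bool) true (fun y IH => IH && !Bad h i n y) m = All h i n m
  | 0 => rfl
  | m + 1 => by
    simp only [All]
    rw [← all_eq_rec h i n m]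

set_option maxHeartbeats 1000000 in
theorem compAll (hh : Computable h) : Computable fun p : ℕ × ℕ => All h p.1 p.2 p.2 := by
  have hproj : Computable fun z : (ℕ × ℕ) × ℕ × Bool => (z.1, z.2.1) :=
    Computable.pair Computable.fst (Computable.fst.comp Computable.snd)
  have hbad' := (compBad hh).comp hproj
  have hbad : Computable fun z : (ℕ × ℕ) × ℕ × Bool => Bad h z.1.1 z.1.2 z.2.1 :=
    hbad'.of_eq fun z => rfl
  have hstep : Computable fun z : (ℕ × ℕ) × ℕ × Bool => z.2.2 && !Bad h z.1.1 z.1.2 z.2.1 :=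
    cband (Computable.snd.comp Computable.snd) (cbnot hbad)
  have main : Computable fun p : ℕ × ℕ =>
      Nat.rec (motive := fun _ => Bool) true (fun y IH => IH && !Bad h p.1 p.2 y) p.2 :=
    Computable.nat_rec Computable.snd (Computable.const true) hstep.to₂
  exact main.of_eq fun p => all_eq_rec h p.1 p.2 p.2

theorem compP (hh : Computable h) : Computable₂ (P h) := by
  have this1 := cband (cband
    (cdne ((compU hh).comp Computable.snd) (Computable.const 0))
    (cdeq ((compI hh).comp Computable.snd) Computable.fst))
    (compAll hh)
  have c : Computable fun p : ℕ × ℕ => P h p.1 p.2 := this1.of_eq fun p => by simp [P]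
  exact c

theorem compLB (hh : Computable h) : Computable₂ (LB h) := by
  have hg : Computable fun p : ℕ × ℕ => (bif P h p.1 0 then 0 else 1 : ℕ) :=
    Computable.cond ((compP hh).comp Computable.fst (Computable.const 0))
      (Computable.const 0) (Computable.const 1)
  have hstep : Computable fun z : (ℕ × ℕ) × ℕ × ℕ =>
      (bif Nat.ble z.2.2 z.2.1 then z.2.2
        else bif P h z.1.1 (z.2.1 + 1) then z.2.1 + 1 else z.2.1 + 2) := by
    have hc1 : Computable fun z : (ℕ × ℕ) × ℕ × ℕ => Nat.ble z.2.2 z.2.1 :=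
      (cdle (Computable.snd.comp Computable.snd) (Computable.fst.comp Computable.snd)).of_eq
        fun z => (ble_eq_decide _ _).symm
    have hc2 : Computable fun z : (ℕ × ℕ) × ℕ × ℕ => P h z.1.1 (z.2.1 + 1) :=
      (compP hh).comp (Computable.fst.comp Computable.fst)
        (Computable.succ.comp (Computable.fst.comp Computable.snd))
    exact Computable.cond hc1 (Computable.snd.comp Computable.snd)
      (Computable.cond hc2 (Computable.succ.comp (Computable.fst.comp Computable.snd))
        (Computable.succ.comp (Computable.succ.comp (Computable.fst.comp Computable.snd))))
  have main := Computable.nat_rec Computable.snd hg hstep.to₂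
  have c : Computable fun p : ℕ × ℕ => LB h p.1 p.2 := by
    refine main.of_eq fun p => ?_
    induction p.2 with
    | zero => rfl
    | succ s ih => simp only [LB, ← ih]
  exact c

theorem compGB (hh : Computable h) : Computable₂ (GB h) := by
  have hstep : Computable fun z : (ℕ × ℕ) × ℕ × ℕ =>
      (bif P h z.1.1 (z.2.1 + 1) then z.2.1 + 1 else z.2.2) :=
    Computable.cond ((compP hh).comp (Computable.fst.comp Computable.fst)
        (Computable.succ.comp (Computable.fst.comp Computable.snd)))
      (Computable.succ.comp (Computable.fst.comp Computable.snd))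
      (Computable.snd.comp Computable.snd)
  have main := Computable.nat_rec Computable.snd (Computable.const 0) hstep.to₂
  have c : Computable fun p : ℕ × ℕ => GB h p.1 p.2 := by
    refine main.of_eq fun p => ?_
    induction p.2 with
    | zero => rfl
    | succ s ih => simp only [GB, ← ih]
  exact c

theorem compK (hh : Computable h) : Computable₂ (K h) := by
  have hx : Computable fun p : ℕ × ℕ => (Nat.unpair (Nat.unpair p.2).2).1 :=
    Computable.fst.comp (Computable.unpair.comp
      (Computable.snd.comp (Computable.unpair.comp Computable.snd)))
  have hs : Computable fun p : ℕ × ℕ => (Nat.unpair (Nat.unpair p.2).2).2 :=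
    Computable.snd.comp (Computable.unpair.comp
      (Computable.snd.comp (Computable.unpair.comp Computable.snd)))
  have hc0 : Computable fun p : ℕ × ℕ => Nat.beq (Nat.unpair p.2).1 0 :=
    (cdeq (Computable.fst.comp (Computable.unpair.comp Computable.snd))
      (Computable.const 0)).of_eq fun p => (beq_eq_decide _ _).symm
  have hb1 : Computable fun p : ℕ × ℕ => Nat.pair (Nat.unpair p.2).2 0 :=
    cpair (Computable.snd.comp (Computable.unpair.comp Computable.snd)) (Computable.const 0)
  have hlbx : Computable fun p : ℕ × ℕ => LB h p.1 ((Nat.unpair (Nat.unpair p.2).2).1) :=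
    (compLB hh).comp Computable.fst hx
  have hlbs : Computable fun p : ℕ × ℕ => LB h p.1 ((Nat.unpair (Nat.unpair p.2).2).2) :=
    (compLB hh).comp Computable.fst hs
  have hcondx : Computable fun p : ℕ × ℕ =>
      Nat.ble (LB h p.1 ((Nat.unpair (Nat.unpair p.2).2).1)) ((Nat.unpair (Nat.unpair p.2).2).1) :=
    (cdle hlbx hx).of_eq fun p => (ble_eq_decide _ _).symm
  have hconds : Computable fun p : ℕ × ℕ =>
      Nat.ble (LB h p.1 ((Nat.unpair (Nat.unpair p.2).2).2)) ((Nat.unpair (Nat.unpair p.2).2).2) :=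
    (cdle hlbs hs).of_eq fun p => (ble_eq_decide _ _).symm
  have hb2 : Computable fun p : ℕ × ℕ =>
      Nat.pair ((Nat.unpair (Nat.unpair p.2).2).1)
        (V h (GB h p.1 ((Nat.unpair (Nat.unpair p.2).2).1)) + 1) :=
    cpair hx (Computable.succ.comp ((compV hh).comp ((compGB hh).comp Computable.fst hx)))
  have hb3 : Computable fun p : ℕ × ℕ =>
      Nat.pair ((Nat.unpair (Nat.unpair p.2).2).1)
        (V h (LB h p.1 ((Nat.unpair (Nat.unpair p.2).2).2)) + 1) :=
    cpair hx (Computable.succ.comp ((compV hh).comp hlbs))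
  have c : Computable fun p : ℕ × ℕ => K h p.1 p.2 :=
    Computable.cond hc0 hb1
      (Computable.cond hcondx hb2
        (Computable.cond hconds hb3 (Computable.const (Nat.pair 0 0))))
  exact c

end comph

end SVaux

namespace SVaux

theorem k_eq (h : ℕ → ℕ) (i n : ℕ) :
    K h i n =
      if (Nat.unpair n).1 = 0 then Nat.pair (Nat.unpair n).2 0
      else if LB h i (Nat.unpair (Nat.unpair n).2).1 ≤ (Nat.unpair (Nat.unpair n).2).1 then
        Nat.pair (Nat.unpair (Nat.unpair n).2).1
          (V h (GB h i (Nat.unpair (Nat.unpair n).2).1) + 1)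
      else if LB h i (Nat.unpair (Nat.unpair n).2).2 ≤ (Nat.unpair (Nat.unpair n).2).2 then
        Nat.pair (Nat.unpair (Nat.unpair n).2).1
          (V h (LB h i (Nat.unpair (Nat.unpair n).2).2) + 1)
      else Nat.pair 0 0 := by
  simp only [K, ble_eq_decide, beq_eq_decide, Bool.cond_decide]

theorem mem_WA {θ : ℕ → ℕ →. ℕ} {h : ℕ → ℕ}
    (hr : Set.range h = {n | ∃ w, n = Nat.pair w 0} ∪
      {n | ∃ i x z, θ i x = Part.some z ∧ n = Nat.pair (Nat.pair i x) (z + 1)})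
    {i w : ℕ} : w ∈ WA θ i ↔ ∃ n, U h n ≠ 0 ∧ I h n = i ∧ V h n = w := by
  constructor
  · rintro ⟨x, hx⟩
    have hmem : Nat.pair (Nat.pair i x) (w + 1) ∈ Set.range h := by
      rw [hr]; exact Or.inr ⟨i, x, w, hx, rfl⟩
    obtain ⟨n, hn⟩ := hmem
    refine ⟨n, ?_, ?_, ?_⟩ <;> simp [U, I, V, hn, Nat.unpair_pair]
  · rintro ⟨n, hU, hI, hV⟩
    have hmem : h n ∈ Set.range h := ⟨n, rfl⟩
    rw [hr] at hmem
    rcases hmem with ⟨w', hw'⟩ | ⟨i', x, z, hz, hn⟩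
    · exact absurd (by simp [U, hw', Nat.unpair_pair]) hU
    · have hI' : I h n = i' := by simp [I, hn, Nat.unpair_pair]
      have hV' : V h n = z := by simp [V, hn, Nat.unpair_pair]
      rw [← hI', hI, ← hV', hV] at hz
      exact ⟨x, hz⟩

theorem exists_P_of_mem {θ : ℕ → ℕ →. ℕ} {h : ℕ → ℕ}
    (hr : Set.range h = {n | ∃ w, n = Nat.pair w 0} ∪
      {n | ∃ i x z, θ i x = Part.some z ∧ n = Nat.pair (Nat.pair i x) (z + 1)})
    {i w : ℕ} (hw : w ∈ WA θ i) :
    ∃ n, P h i n = true ∧ (Nat.unpair (V h n)).1 = (Nat.unpair w).1 ∧ V h n ∈ WA θ i := by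
  classical
  obtain ⟨n0, hU0, hI0, hV0⟩ := (mem_WA hr).mp hw
  have hQ : ∃ m, U h m ≠ 0 ∧ I h m = i ∧ (Nat.unpair (V h m)).1 = (Nat.unpair w).1 :=
    ⟨n0, hU0, hI0, by rw [hV0]⟩
  obtain ⟨hU1, hI1, hx1⟩ := Nat.find_spec hQ
  refine ⟨Nat.find hQ, ?_, hx1, (mem_WA hr).mpr ⟨Nat.find hQ, hU1, hI1, rfl⟩⟩
  rw [p_iff]
  refine ⟨hU1, hI1, fun m hm => ?_⟩
  rw [Bool.eq_false_iff]
  intro hbad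
  obtain ⟨hU2, hI2, hx2, _⟩ := bad_iff.mp hbad
  exact Nat.find_min hQ hm ⟨hU2, hI2, hx2.trans hx1⟩

theorem compF {h : ℕ → ℕ} (hh : Computable h) (i c : ℕ) :
    Computable fun x => if LB h i x ≤ x then V h (GB h i x) else V h c := by
  have hlb : Computable fun x : ℕ => LB h i x :=
    ((compLB hh).comp (Computable.const i) Computable.id).of_eq fun x => rfl
  have hgb : Computable fun x : ℕ => V h (GB h i x) :=
    ((compV hh).comp (((compGB hh).comp (Computable.const i)
      Computable.id).of_eq fun x => rfl)).of_eq fun x => rfl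
  have hcond : Computable fun x : ℕ => decide (LB h i x ≤ x) := cdle hlb Computable.id
  exact (Computable.cond hcond hgb (Computable.const (V h c))).of_eq fun x => by
    rw [Bool.cond_decide]

theorem range_k_nonempty {h : ℕ → ℕ} {i c : ℕ} (hpc : P h i c = true)
    (hcmin : ∀ m < c, P h i m = false) :
    Set.range (K h i) =
      graphE (fun x => Part.some (if LB h i x ≤ x then V h (GB h i x) else V h c)) := by
  ext m
  constructor
  · rintro ⟨n, rfl⟩
    rw [k_eq]
    split_ifs with h0 hbx hbs
    · exact Or.inl ⟨(Nat.unpair n).2, rfl⟩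
    · refine Or.inr ⟨(Nat.unpair (Nat.unpair n).2).1,
        V h (GB h i (Nat.unpair (Nat.unpair n).2).1), ?_, rfl⟩
      exact congrArg Part.some (if_pos hbx)
    · have hlbc : LB h i (Nat.unpair (Nat.unpair n).2).2 = c := by
        rcases lb_spec h i (Nat.unpair (Nat.unpair n).2).2 with ⟨h1, h2, h3⟩ | ⟨h1, _⟩
        · by_contra hcne
          rcases Nat.lt_or_ge (LB h i (Nat.unpair (Nat.unpair n).2).2) c with hlt | hge
          · rw [hcmin _ hlt] at h2; exact Bool.false_ne_true h2
          · have hlt : c < LB h i (Nat.unpair (Nat.unpair n).2).2 :=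
              lt_of_le_of_ne hge (Ne.symm hcne)
            rw [h3 c hlt] at hpc; exact Bool.false_ne_true hpc
        · exact absurd hbs (by omega)
      refine Or.inr ⟨(Nat.unpair (Nat.unpair n).2).1, V h c, ?_, by rw [hlbc]⟩
      exact congrArg Part.some (if_neg hbx)
    · exact Or.inl ⟨0, rfl⟩
  · rintro (⟨y, rfl⟩ | ⟨x, z, hz, rfl⟩)
    · refine ⟨Nat.pair 0 y, ?_⟩
      rw [k_eq]
      simp [Nat.unpair_pair]
    · have hzf : (if LB h i x ≤ x then V h (GB h i x) else V h c) = z := Part.some_inj.mp hz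
      by_cases hbx : LB h i x ≤ x
      · refine ⟨Nat.pair 1 (Nat.pair x x), ?_⟩
        rw [k_eq]
        simp only [Nat.unpair_pair]
        rw [if_neg one_ne_zero, if_pos hbx, ← hzf, if_pos hbx]
      · have hcc : LB h i c ≤ c := lb_found (le_refl c) hpc
        have hlbcc : LB h i c = c := lb_eq_of_p hpc hcmin
        refine ⟨Nat.pair 1 (Nat.pair x c), ?_⟩
        rw [k_eq]
        simp only [Nat.unpair_pair]
        rw [if_neg one_ne_zero, if_neg hbx, if_pos hcc, hlbcc, ← hzf, if_neg hbx]

theorem valueset_nonempty {h : ℕ → ℕ} {i c : ℕ} (hpc : P h i c = true) :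
    {w | ∃ x, (if LB h i x ≤ x then V h (GB h i x) else V h c) = w} =
      {w | ∃ n, P h i n = true ∧ V h n = w} := by
  ext w
  constructor
  · rintro ⟨x, rfl⟩
    by_cases hbx : LB h i x ≤ x
    · rcases lb_spec h i x with ⟨h1, h2, _⟩ | ⟨h1, _⟩
      · exact ⟨GB h i x, gb_p h i x ⟨LB h i x, h1, h2⟩, by rw [if_pos hbx]⟩
      · omega
    · exact ⟨c, hpc, by rw [if_neg hbx]⟩
  · rintro ⟨n, hp, rfl⟩
    refine ⟨n, ?_⟩
    rw [if_pos (lb_found (le_refl n) hp), gb_self hp]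

theorem range_k_empty {h : ℕ → ℕ} {i : ℕ} (hemp : ∀ n, P h i n = false) :
    Set.range (K h i) = graphE (fun _ => Part.none) := by
  have hnolb : ∀ s, ¬ LB h i s ≤ s := by
    intro s hs
    rcases lb_spec h i s with ⟨_, h2, _⟩ | ⟨h1, _⟩
    · rw [hemp] at h2; exact Bool.false_ne_true h2
    · omega
  ext m
  constructor
  · rintro ⟨n, rfl⟩
    rw [k_eq]
    split_ifs with h0 hbx hbs
    · exact Or.inl ⟨(Nat.unpair n).2, rfl⟩
    · exact absurd hbx (hnolb _)
    · exact absurd hbs (hnolb _)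
    · exact Or.inl ⟨0, rfl⟩
  · rintro (⟨y, rfl⟩ | ⟨x, z, hz, _⟩)
    · refine ⟨Nat.pair 0 y, ?_⟩
      rw [k_eq]
      simp [Nat.unpair_pair]
    · exact absurd hz.symm (Part.some_ne_none z)

end SVaux

/-- Single-valuedness Theorem I. -/
theorem single_valuedness_I (A : Set ℕ) (hAinf : A.Infinite) (hAce : CEset A)
    (θ : ℕ → ℕ →. ℕ) (hθ : QuasiGodel A θ) :
    ∃ sv : ℕ → ℕ, Computable sv ∧ ∀ i,
      SingleValued (WA θ (sv i)) ∧
      WA θ (sv i) ⊆ WA θ i ∧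
      {x : ℕ | ∃ y, Nat.pair x y ∈ WA θ (sv i)} = {x : ℕ | ∃ y, Nat.pair x y ∈ WA θ i} ∧
      (SingleValued (WA θ i) → WA θ (sv i) = WA θ i) := by
  classical
  obtain ⟨hrangeθ, hq1, hq2⟩ := hθ
  obtain ⟨h, hh, hr⟩ := hq1
  obtain ⟨v, hv, hvspec⟩ := hq2 (SVaux.K h) (SVaux.compK hh)
  refine ⟨v, hv, fun i => ?_⟩
  have hWvi : WA θ (v i) = {w | ∃ n, SVaux.P h i n = true ∧ SVaux.V h n = w} := by
    by_cases hne : ∃ n, SVaux.P h i n = true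
    · have hpc : SVaux.P h i (Nat.find hne) = true := Nat.find_spec hne
      have hcmin : ∀ m < Nat.find hne, SVaux.P h i m = false := fun m hm =>
        Bool.eq_false_iff.mpr (Nat.find_min hne hm)
      have hrSA : (fun x => Part.some (if SVaux.LB h i x ≤ x then SVaux.V h (SVaux.GB h i x)
          else SVaux.V h (Nat.find hne))) ∈ SA A :=
        Or.inl ⟨_, SVaux.compF hh i (Nat.find hne), fun _ => rfl⟩
      have hθvi := hvspec i _ hrSA (SVaux.range_k_nonempty hpc hcmin)
      have : WA θ (v i) = {w | ∃ x, (if SVaux.LB h i x ≤ x then SVaux.V h (SVaux.GB h i x)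
          else SVaux.V h (Nat.find hne)) = w} := by
        ext w
        simp only [WA, hθvi, Set.mem_setOf_eq, Part.some_inj]
      rw [this, SVaux.valueset_nonempty hpc]
    · have hemp : ∀ n, SVaux.P h i n = false := fun n =>
        Bool.eq_false_iff.mpr fun hc => hne ⟨n, hc⟩
      have hrSA : (fun _ : ℕ => (Part.none : Part ℕ)) ∈ SA A :=
        Or.inr (Or.inl (by ext x; simp [Part.not_none_dom]))
      have hθvi := hvspec i _ hrSA (SVaux.range_k_empty hemp)
      ext w
      simp only [WA, hθvi, Set.mem_setOf_eq]
      constructor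
      · rintro ⟨x, hx⟩
        exact absurd hx.symm (Part.some_ne_none w)
      · rintro ⟨n, hp, _⟩
        rw [hemp n] at hp
        exact absurd hp (Bool.false_ne_true)
  have hsub : WA θ (v i) ⊆ WA θ i := by
    rw [hWvi]
    rintro w ⟨n, hpn, hvn⟩
    obtain ⟨hU, hI, _⟩ := SVaux.p_iff.mp hpn
    exact (SVaux.mem_WA hr).mpr ⟨n, hU, hI, hvn⟩
  refine ⟨?_, hsub, ?_, ?_⟩
  · -- single-valuedness
    rw [hWvi]
    rintro x y y' ⟨n, hpn, hvn⟩ ⟨n', hpn', hvn'⟩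
    by_contra hyy
    have hvne : SVaux.V h n ≠ SVaux.V h n' := by
      rw [hvn, hvn']
      intro hc
      exact hyy (Nat.pair_eq_pair.mp hc).2
    have hnn : n ≠ n' := fun hc => hvne (by rw [hc])
    obtain ⟨hU, hI, hmin⟩ := SVaux.p_iff.mp hpn
    obtain ⟨hU', hI', hmin'⟩ := SVaux.p_iff.mp hpn'
    rcases hnn.lt_or_gt with hlt | hlt
    · have hb := hmin' n hlt
      rw [Bool.eq_false_iff] at hb
      apply hb
      rw [SVaux.bad_iff]
      exact ⟨hU, hI, by rw [hvn, hvn']; simp [Nat.unpair_pair], hvne⟩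
    · have hb := hmin n' hlt
      rw [Bool.eq_false_iff] at hb
      apply hb
      rw [SVaux.bad_iff]
      exact ⟨hU', hI', by rw [hvn, hvn']; simp [Nat.unpair_pair],
        fun hc => hvne hc.symm⟩
  · -- equal projections
    ext x
    constructor
    · rintro ⟨y, hy⟩
      exact ⟨y, hsub hy⟩
    · rintro ⟨y, hy⟩
      obtain ⟨n, hpn, hx1, _⟩ := SVaux.exists_P_of_mem hr hy
      simp only [Nat.unpair_pair] at hx1
      refine ⟨(Nat.unpair (SVaux.V h n)).2, ?_⟩
      rw [hWvi]
      refine ⟨n, hpn, ?_⟩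
      rw [← hx1]
      exact (Nat.pair_unpair _).symm
  · -- single-valued implies equality
    intro hsv
    refine Set.Subset.antisymm hsub ?_
    intro w hw
    obtain ⟨n, hpn, hx1, hmem⟩ := SVaux.exists_P_of_mem hr hw
    have h1 : Nat.pair (Nat.unpair w).1 (Nat.unpair (SVaux.V h n)).2 ∈ WA θ i := by
      rw [← hx1, Nat.pair_unpair]
      exact hmem
    have h2 : Nat.pair (Nat.unpair w).1 (Nat.unpair w).2 ∈ WA θ i := by
      rw [Nat.pair_unpair]
      exact hw
    have heq := hsv _ _ _ h1 h2
    rw [hWvi]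
    refine ⟨n, hpn, ?_⟩
    rw [← Nat.pair_unpair (SVaux.V h n), hx1, heq, Nat.pair_unpair]
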